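/- Corollary 2 (variation-adapted stepsizes): Let β ∈ [0, 1). Under the MOSP setting with ε > V̄, λ_1 = 0, and stepsizes α = μ = T^{(β−1)/2}, the dynamic fit satisfies Fit_T ≤ M + (2·G·R·T^{(1−β)/2} + (R²/2)·T^{1−β} + M²/2)/(ε − V̄), and the dynamic regret satisfies Reg_T ≤ R·V_x·T^{(1−β)/2} + λ̄_T·V_g + (R²/2)·T^{(1−β)/2} + (G²/2)·T^{(1+β)/2} + (M²/2)·(T+1)·T^{(β−1)/2}, where λ̄_T := M·T^{(β−1)/2} + (2·G·R + (R²/2)·T^{(1−β)/2} + (M²/2)·T^{(β−1)/2})/(ε − V̄). -/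

import Mathlib

open scoped RealInnerProductSpace
open Finset

noncomputable def posProj {m : ℕ} (v : EuclideanSpace ℝ (Fin m)) :
    EuclideanSpace ℝ (Fin m) := WithLp.toLp 2 (fun i => max (v i) 0)

section aux
variable {m : ℕ}

lemma posProj_apply (v : EuclideanSpace ℝ (Fin m)) (i : Fin m) : posProj v i = max (v i) 0 := rfl

lemma norm_sq_euclid (v : EuclideanSpace ℝ (Fin m)) : ‖v‖ ^ 2 = ∑ i, (v i) ^ 2 := by
  rw [← real_inner_self_eq_norm_sq, PiLp.inner_apply]
  simp [sq]

lemma norm_le_norm_entry {v w : EuclideanSpace ℝ (Fin m)} (h : ∀ i, |v i| ≤ |w i|) :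
    ‖v‖ ≤ ‖w‖ := by
  have h2 : ‖v‖ ^ 2 ≤ ‖w‖ ^ 2 := by
    rw [norm_sq_euclid, norm_sq_euclid]
    exact Finset.sum_le_sum fun i _ => by nlinarith [h i, abs_nonneg (v i), sq_abs (v i), sq_abs (w i)]
  nlinarith [norm_nonneg v, norm_nonneg w]

lemma norm_posProj_le (v : EuclideanSpace ℝ (Fin m)) : ‖posProj v‖ ≤ ‖v‖ := by
  apply norm_le_norm_entry
  intro i
  rw [posProj_apply]
  rcases le_or_gt (v i) 0 with h | h
  · rw [max_eq_right h]; simp [abs_nonneg]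
  · rw [max_eq_left h.le]

lemma le_posProj (v : EuclideanSpace ℝ (Fin m)) (i : Fin m) : v i ≤ posProj v i := le_max_left _ _

lemma posProj_nonneg (v : EuclideanSpace ℝ (Fin m)) (i : Fin m) : 0 ≤ posProj v i := le_max_right _ _

lemma inner_le_entry {l u w : EuclideanSpace ℝ (Fin m)} (hl : ∀ i, 0 ≤ l i)
    (h : ∀ i, u i ≤ w i) : ⟪l, u⟫ ≤ ⟪l, w⟫ := by
  rw [PiLp.inner_apply, PiLp.inner_apply]
  apply Finset.sum_le_sum
  intro i _
  simp only [RCLike.inner_apply, conj_trivial]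
  exact mul_le_mul_of_nonneg_right (h i) (hl i)

lemma inner_le_posProj {l d : EuclideanSpace ℝ (Fin m)} (hl : ∀ i, 0 ≤ l i) :
    ⟪l, d⟫ ≤ ‖l‖ * ‖posProj d‖ :=
  (inner_le_entry hl (le_posProj d)).trans (real_inner_le_norm _ _)

lemma norm_le_sum_of_nonneg {l : EuclideanSpace ℝ (Fin m)} (hl : ∀ i, 0 ≤ l i) :
    ‖l‖ ≤ ∑ i, l i := by
  have h2 : ‖l‖ ^ 2 ≤ (∑ i, l i) ^ 2 := by
    rw [norm_sq_euclid, sq, Finset.sum_mul]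
    apply Finset.sum_le_sum
    intro i _
    rw [sq]
    exact mul_le_mul_of_nonneg_left (Finset.single_le_sum (fun j _ => hl j) (Finset.mem_univ i)) (hl i)
  have hs : 0 ≤ ∑ i, l i := Finset.sum_nonneg fun i _ => hl i
  nlinarith [norm_nonneg l]

lemma inner_slater {l w : EuclideanSpace ℝ (Fin m)} (hl : ∀ i, 0 ≤ l i) {ε : ℝ} (hε : 0 ≤ ε)
    (hw : ∀ i, w i ≤ -ε) : ⟪l, w⟫ ≤ -ε * ‖l‖ := by
  have h1 : ⟪l, w⟫ ≤ ∑ i, l i * (-ε) := by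
    rw [PiLp.inner_apply]
    apply Finset.sum_le_sum
    intro i _
    simp only [RCLike.inner_apply, conj_trivial]
    rw [mul_comm]; exact mul_le_mul_of_nonneg_left (hw i) (hl i)
  have h2 : ∑ i, l i * (-ε) = -ε * ∑ i, l i := by rw [← Finset.sum_mul]; ring
  have := norm_le_sum_of_nonneg hl
  nlinarith

end aux
section aux2
variable {n : ℕ}

-- gradient inequality for convex differentiable functions
lemma convex_gradient_ineq (f : EuclideanSpace ℝ (Fin n) → ℝ)
    (hconv : ConvexOn ℝ Set.univ f) (hdiff : Differentiable ℝ f)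
    (x y : EuclideanSpace ℝ (Fin n)) :
    f x + ⟪gradient f x, y - x⟫ ≤ f y := by
  set h : ℝ → ℝ := fun θ => f (x + θ • (y - x)) with hh
  have hγ : ∀ θ : ℝ, HasDerivAt (fun θ : ℝ => x + θ • (y - x)) (y - x) θ := by
    intro θ
    simpa using ((hasDerivAt_id θ).smul_const (y - x)).const_add x
  have hgrad : HasGradientAt f (gradient f x) x := (hdiff x).hasGradientAt
  have hfd : HasFDerivAt f ((InnerProductSpace.toDual ℝ _) (gradient f x)) x := by
    rwa [hasGradientAt_iff_hasFDerivAt] at hgrad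
  have hd : HasDerivAt h ⟪gradient f x, y - x⟫ 0 := by
    have hfd' : HasFDerivAt f ((InnerProductSpace.toDual ℝ _) (gradient f x)) ((fun θ : ℝ => x + θ • (y - x)) 0) := by
      simpa using hfd
    have := hfd'.comp_hasDerivAt 0 (hγ 0)
    exact this
  have hhc : ConvexOn ℝ Set.univ h := by
    have := hconv.comp_affineMap (AffineMap.lineMap x y : ℝ →ᵃ[ℝ] EuclideanSpace ℝ (Fin n))
    have he : ∀ θ : ℝ, (AffineMap.lineMap x y : ℝ →ᵃ[ℝ] EuclideanSpace ℝ (Fin n)) θ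
        = x + θ • (y - x) := by
      intro θ; rw [AffineMap.lineMap_apply_module]; module
    have e : h = f ∘ (AffineMap.lineMap x y : ℝ →ᵃ[ℝ] EuclideanSpace ℝ (Fin n)) := by
      funext θ
      simp [h, Function.comp, he θ]
    rw [e]; exact this.subset (Set.subset_univ _) convex_univ
  have hslope := hhc.le_slope_of_hasDerivAt (Set.mem_univ (0:ℝ)) (Set.mem_univ (1:ℝ))
    one_pos hd
  rw [slope_def_field] at hslope
  have h0 : h 0 = f x := by simp [h]
  have h1 : h 1 = f y := by simp [h]
  have : ⟪gradient f x, y - x⟫ ≤ h 1 - h 0 := by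
    have : (h 1 - h 0) / (1 - 0) = h 1 - h 0 := by norm_num
    linarith [hslope, this ▸ hslope]
  linarith [h0 ▸ h1 ▸ this]

end aux2
section aux3
variable {n : ℕ}

lemma norm_combo_sq (a b : EuclideanSpace ℝ (Fin n)) (θ : ℝ) :
    ‖(1 - θ) • a + θ • b‖ ^ 2
      = (1 - θ) * ‖a‖ ^ 2 + θ * ‖b‖ ^ 2 - θ * (1 - θ) * ‖b - a‖ ^ 2 := by
  have key : ⟪(1 - θ) • a + θ • b, (1 - θ) • a + θ • b⟫
      = (1 - θ) * ⟪a, a⟫ + θ * ⟪b, b⟫ - θ * (1 - θ) * ⟪b - a, b - a⟫ := by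
    simp only [inner_add_left, inner_add_right, inner_sub_left, inner_sub_right,
      real_inner_smul_left, real_inner_smul_right]
    rw [real_inner_comm b a]
    ring
  rw [← real_inner_self_eq_norm_sq, ← real_inner_self_eq_norm_sq,
    ← real_inner_self_eq_norm_sq, ← real_inner_self_eq_norm_sq, key]

lemma prox_strong (X : Set (EuclideanSpace ℝ (Fin n))) (hXconv : Convex ℝ X)
    (φ : EuclideanSpace ℝ (Fin n) → ℝ)
    (hφ : ∀ a ∈ X, ∀ b ∈ X, ∀ θ : ℝ, 0 ≤ θ → θ ≤ 1 →
      φ ((1 - θ) • a + θ • b) ≤ (1 - θ) * φ a + θ * φ b)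
    (c : EuclideanSpace ℝ (Fin n)) (α : ℝ) (hα : 0 < α)
    (xp : EuclideanSpace ℝ (Fin n)) (hxp : xp ∈ X)
    (hmin : ∀ z ∈ X, φ xp + ‖xp - c‖ ^ 2 / (2 * α) ≤ φ z + ‖z - c‖ ^ 2 / (2 * α)) :
    ∀ z ∈ X, φ xp + ‖xp - c‖ ^ 2 / (2 * α) + ‖z - xp‖ ^ 2 / (2 * α)
      ≤ φ z + ‖z - c‖ ^ 2 / (2 * α) := by
  intro z hz
  set D : ℝ := (φ z + ‖z - c‖ ^ 2 / (2 * α)) - (φ xp + ‖xp - c‖ ^ 2 / (2 * α)) with hD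
  have hD0 : 0 ≤ D := by have := hmin z hz; simp only [hD]; linarith
  set c₀ : ℝ := ‖z - xp‖ ^ 2 / (2 * α) with hc₀
  have hc₀0 : 0 ≤ c₀ := by positivity
  have key : ∀ θ : ℝ, 0 < θ → θ ≤ 1 → (1 - θ) * c₀ ≤ D := by
    intro θ hθ0 hθ1
    set w := (1 - θ) • xp + θ • z with hw
    have hwX : w ∈ X := hXconv hxp hz (by linarith) hθ0.le (by ring)
    have h1 : φ xp + ‖xp - c‖ ^ 2 / (2 * α) ≤ φ w + ‖w - c‖ ^ 2 / (2 * α) := hmin w hwX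
    have h2 : φ w ≤ (1 - θ) * φ xp + θ * φ z := hφ xp hxp z hz θ hθ0.le hθ1
    have h3 : ‖w - c‖ ^ 2 = (1 - θ) * ‖xp - c‖ ^ 2 + θ * ‖z - c‖ ^ 2
        - θ * (1 - θ) * ‖z - xp‖ ^ 2 := by
      have hwc : w - c = (1 - θ) • (xp - c) + θ • (z - c) := by
        simp only [hw, smul_sub]; module
      rw [hwc, norm_combo_sq]
      congr 3
      abel
    rw [h3] at h1
    have hsplit : ((1 - θ) * ‖xp - c‖ ^ 2 + θ * ‖z - c‖ ^ 2
        - θ * (1 - θ) * ‖z - xp‖ ^ 2) / (2 * α)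
        = (1 - θ) * (‖xp - c‖ ^ 2 / (2 * α)) + θ * (‖z - c‖ ^ 2 / (2 * α))
          - θ * ((1 - θ) * c₀) := by
      rw [hc₀]; ring
    rw [hsplit] at h1
    have hmul : θ * ((1 - θ) * c₀) ≤ θ * D := by
      simp only [hD]; linarith
    exact le_of_mul_le_mul_left hmul hθ0
  by_contra hcon
  push_neg at hcon
  have hcon' : D < c₀ := by simp only [hD, hc₀] at *; linarith
  have hc0pos : 0 < c₀ := lt_of_le_of_lt hD0 hcon'
  set θ := (1 - D / c₀) / 2 with hθ
  have hr : D / c₀ < 1 := (div_lt_one hc0pos).2 hcon'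
  have hr0 : 0 ≤ D / c₀ := div_nonneg hD0 hc0pos.le
  have hθ0 : 0 < θ := by rw [hθ]; linarith
  have hθ1 : θ ≤ 1 := by rw [hθ]; linarith
  have hk := key θ hθ0 hθ1
  have hDc : D = (D / c₀) * c₀ := by field_simp
  rw [hθ] at hk
  nlinarith [hk, hc0pos]

end aux3

lemma sum_Icc_telescope (a : ℕ → ℝ) : ∀ T : ℕ, ∑ t ∈ Icc 1 T, (a t - a (t + 1)) = a 1 - a (T + 1)
  | 0 => by simp
  | T + 1 => by
    rw [Finset.sum_Icc_succ_top (Nat.le_add_left 1 T), sum_Icc_telescope a T]; ring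

set_option maxHeartbeats 1000000 in
/-- Corollary 2 (variation-adapted stepsizes `α = μ = T^{(β−1)/2}`): dynamic fit
and dynamic regret bounds. -/
theorem mosp_variation_adapted_bounds {n m : ℕ} (hm : 0 < m)
    (T : ℕ) (hT : 1 ≤ T)
    (X : Set (EuclideanSpace ℝ (Fin n))) (hXne : X.Nonempty) (hXconv : Convex ℝ X)
    (R G M ε Vbar α μ : ℝ)
    (hR : ∀ x ∈ X, ∀ y ∈ X, ‖x - y‖ ≤ R)
    (f : ℕ → EuclideanSpace ℝ (Fin n) → ℝ)
    (hfconv : ∀ t, ConvexOn ℝ Set.univ (f t))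
    (hfdiff : ∀ t, Differentiable ℝ (f t))
    (hG : ∀ t, ∀ x ∈ X, ‖gradient (f t) x‖ ≤ G)
    (g : ℕ → EuclideanSpace ℝ (Fin n) → EuclideanSpace ℝ (Fin m))
    (hgconv : ∀ t i, ConvexOn ℝ Set.univ fun x => g t x i)
    (hM : ∀ t, ∀ x ∈ X, ‖g t x‖ ≤ M)
    (hε : 0 < ε)
    (hSlater : ∃ xt ∈ X, ∀ t, ∀ i, g t xt i ≤ -ε)
    (hVbar : 0 ≤ Vbar)
    (hvar : ∀ t, ∀ x ∈ X, ‖posProj (g (t + 1) x - g t x)‖ ≤ Vbar)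
    (hεV : Vbar < ε)
    (hα : 0 < α) (hμ : 0 < μ)
    (β : ℝ) (hβ0 : 0 ≤ β) (hβ1 : β < 1)
    (hαT : α = (T : ℝ) ^ ((β - 1) / 2)) (hμT : μ = (T : ℝ) ^ ((β - 1) / 2))
    (x : ℕ → EuclideanSpace ℝ (Fin n))
    (lam : ℕ → EuclideanSpace ℝ (Fin m))
    (hx0 : x 0 ∈ X) (hlam1 : lam 1 = 0)
    (hprimal : ∀ t, 1 ≤ t → x t ∈ X ∧ ∀ z ∈ X,
      ⟪gradient (f (t - 1)) (x (t - 1)), x t - x (t - 1)⟫ + ⟪lam t, g (t - 1) (x t)⟫ +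
          ‖x t - x (t - 1)‖ ^ 2 / (2 * α) ≤
        ⟪gradient (f (t - 1)) (x (t - 1)), z - x (t - 1)⟫ + ⟪lam t, g (t - 1) z⟫ +
          ‖z - x (t - 1)‖ ^ 2 / (2 * α))
    (hdual : ∀ t, 1 ≤ t → lam (t + 1) = posProj (lam t + μ • g t (x t)))
    (xstar : ℕ → EuclideanSpace ℝ (Fin n))
    (hxstar0 : xstar 0 ∈ X)
    (hxstar : ∀ t, 1 ≤ t → t ≤ T → xstar t ∈ X ∧ (∀ i, g t (xstar t) i ≤ 0) ∧
      ∀ z ∈ X, (∀ i, g t z i ≤ 0) → f t (xstar t) ≤ f t z)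
    (v : ℕ → ℝ) (hv : ∀ t, 0 ≤ v t)
    (hvarv : ∀ t, ∀ x ∈ X, ‖posProj (g (t + 1) x - g t x)‖ ≤ v t) :
    (‖posProj (∑ t ∈ Icc 1 T, g t (x t))‖ ≤
      M + (2 * G * R * (T : ℝ) ^ ((1 - β) / 2) + R ^ 2 / 2 * (T : ℝ) ^ (1 - β) +
        M ^ 2 / 2) / (ε - Vbar)) ∧
    (∑ t ∈ Icc 1 T, f t (x t) - ∑ t ∈ Icc 1 T, f t (xstar t) ≤
      R * (∑ t ∈ Icc 1 T, ‖xstar t - xstar (t - 1)‖) * (T : ℝ) ^ ((1 - β) / 2) +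
        (M * (T : ℝ) ^ ((β - 1) / 2) +
          (2 * G * R + R ^ 2 / 2 * (T : ℝ) ^ ((1 - β) / 2) +
            M ^ 2 / 2 * (T : ℝ) ^ ((β - 1) / 2)) / (ε - Vbar)) *
          (∑ t ∈ Icc 1 T, v t) +
        R ^ 2 / 2 * (T : ℝ) ^ ((1 - β) / 2) + G ^ 2 / 2 * (T : ℝ) ^ ((1 + β) / 2) +
        M ^ 2 / 2 * ((T : ℝ) + 1) * (T : ℝ) ^ ((β - 1) / 2)) := by
  obtain ⟨xs, hxsX, hxs⟩ := hSlater
  have hT1R : (1 : ℝ) ≤ T := by exact_mod_cast hT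
  have hT0 : (0 : ℝ) < T := by linarith
  have hR0 : 0 ≤ R := le_trans (norm_nonneg _) (hR xs hxsX xs hxsX)
  have hG0 : 0 ≤ G := le_trans (norm_nonneg _) (hG 0 xs hxsX)
  have hM0 : 0 ≤ M := le_trans (norm_nonneg _) (hM 0 xs hxsX)
  have hεV' : (0 : ℝ) < ε - Vbar := by linarith
  have hxX : ∀ t, x t ∈ X := by
    intro t
    rcases Nat.eq_zero_or_pos t with h | h
    · subst h; exact hx0
    · exact (hprimal t h).1
  have hxsXle : ∀ t, t ≤ T → xstar t ∈ X := by
    intro t htT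
    rcases Nat.eq_zero_or_pos t with h | h
    · subst h; exact hxstar0
    · exact (hxstar t h htT).1
  have hlamnn : ∀ t, 1 ≤ t → ∀ i, 0 ≤ lam t i := by
    refine Nat.le_induction ?_ ?_
    · intro i; rw [hlam1]; simp
    · intro t ht _ i
      rw [hdual t ht]; exact posProj_nonneg _ i
  have hgnorm : ∀ t, ‖g t (x t)‖ ≤ M := fun t => hM t (x t) (hxX t)
  have hdualnorm : ∀ t, 1 ≤ t → ‖lam (t + 1)‖ ≤ ‖lam t + μ • g t (x t)‖ := by
    intro t ht; rw [hdual t ht]; exact norm_posProj_le _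
  have hdrift : ∀ t, 1 ≤ t →
      ‖lam (t + 1)‖ ^ 2 ≤ ‖lam t‖ ^ 2 + 2 * μ * ⟪lam t, g t (x t)⟫ + μ ^ 2 * M ^ 2 := by
    intro t ht
    have h1 : ‖lam t + μ • g t (x t)‖ ^ 2
        = ‖lam t‖ ^ 2 + 2 * (μ * ⟪lam t, g t (x t)⟫) + ‖μ • g t (x t)‖ ^ 2 := by
      rw [norm_add_sq_real, real_inner_smul_right]
    have h2 : ‖μ • g t (x t)‖ ^ 2 = μ ^ 2 * ‖g t (x t)‖ ^ 2 := by
      rw [norm_smul, Real.norm_eq_abs, abs_of_pos hμ]; ring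
    have h3 := hdualnorm t ht
    have h4 : ‖g t (x t)‖ ^ 2 ≤ M ^ 2 := by nlinarith [hgnorm t, norm_nonneg (g t (x t))]
    have h5 : ‖lam (t + 1)‖ ^ 2 ≤ ‖lam t + μ • g t (x t)‖ ^ 2 := by
      nlinarith [norm_nonneg (lam (t + 1)), norm_nonneg (lam t + μ • g t (x t))]
    nlinarith [sq_nonneg μ]
  have hkey : ∀ t, 1 ≤ t →
      ⟪lam t, g t (x t)⟫ ≤ 2 * G * R + R ^ 2 / (2 * α) - (ε - Vbar) * ‖lam t‖ := by
    intro t ht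
    obtain ⟨k, rfl⟩ : ∃ k, t = k + 1 := ⟨t - 1, by omega⟩
    obtain ⟨hxtX, hopt⟩ := hprimal (k + 1) (by omega)
    simp only [Nat.add_sub_cancel] at hopt
    have h := hopt xs hxsX
    have hlnn := hlamnn (k + 1) (by omega)
    have hdnorm : ‖gradient (f k) (x k)‖ ≤ G := hG k (x k) (hxX k)
    have hb1 : |⟪gradient (f k) (x k), x (k + 1) - x k⟫| ≤ G * R := by
      refine le_trans (abs_real_inner_le_norm _ _) ?_
      exact mul_le_mul hdnorm (hR _ (hxX (k + 1)) _ (hxX k)) (norm_nonneg _) hG0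
    have hb2 : |⟪gradient (f k) (x k), xs - x k⟫| ≤ G * R := by
      refine le_trans (abs_real_inner_le_norm _ _) ?_
      exact mul_le_mul hdnorm (hR _ hxsX _ (hxX k)) (norm_nonneg _) hG0
    have hb3 : ⟪lam (k + 1), g k xs⟫ ≤ -ε * ‖lam (k + 1)‖ := inner_slater hlnn hε.le (hxs k)
    have hb4 : ‖xs - x k‖ ^ 2 / (2 * α) ≤ R ^ 2 / (2 * α) := by
      rw [div_eq_mul_inv, div_eq_mul_inv]
      refine mul_le_mul_of_nonneg_right ?_ (by positivity)
      nlinarith [hR xs hxsX (x k) (hxX k), norm_nonneg (xs - x k)]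
    have hb5 : 0 ≤ ‖x (k + 1) - x k‖ ^ 2 / (2 * α) := by positivity
    have hmain : ⟪lam (k + 1), g k (x (k + 1))⟫
        ≤ 2 * G * R + R ^ 2 / (2 * α) - ε * ‖lam (k + 1)‖ := by
      have e1 := (abs_le.mp hb1).1
      have e2 := (abs_le.mp hb2).2
      linarith only [h, e1, e2, hb3, hb4, hb5]
    have hvd : ⟪lam (k + 1), g (k + 1) (x (k + 1)) - g k (x (k + 1))⟫
        ≤ ‖lam (k + 1)‖ * Vbar := by
      refine le_trans (inner_le_posProj hlnn) ?_
      exact mul_le_mul_of_nonneg_left (hvar k (x (k + 1)) (hxX (k + 1))) (norm_nonneg _)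
    have hsplit : ⟪lam (k + 1), g (k + 1) (x (k + 1)) - g k (x (k + 1))⟫
        = ⟪lam (k + 1), g (k + 1) (x (k + 1))⟫ - ⟪lam (k + 1), g k (x (k + 1))⟫ :=
      inner_sub_right _ _ _
    have hring : (ε - Vbar) * ‖lam (k + 1)‖
        = ε * ‖lam (k + 1)‖ - Vbar * ‖lam (k + 1)‖ := by ring
    have hvd' : ‖lam (k + 1)‖ * Vbar = Vbar * ‖lam (k + 1)‖ := by ring
    linarith only [hmain, hvd, hsplit, hring, hvd']
  set C : ℝ := (2 * G * R + R ^ 2 / (2 * α) + μ * M ^ 2 / 2) / (ε - Vbar) with hCdef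
  have hCmul : C * (ε - Vbar) = 2 * G * R + R ^ 2 / (2 * α) + μ * M ^ 2 / 2 := by
    rw [hCdef]; field_simp
  have hC0 : 0 ≤ C := by
    refine div_nonneg ?_ hεV'.le
    have h1 : 0 ≤ 2 * G * R := by positivity
    have h2 : 0 ≤ R ^ 2 / (2 * α) := by positivity
    nlinarith [hμ.le, hM0]
  have hL0 : 0 ≤ μ * M + C := by nlinarith [hμ.le, hM0]
  have hlambound : ∀ t, 1 ≤ t → ‖lam t‖ ≤ μ * M + C := by
    refine Nat.le_induction ?_ ?_
    · rw [hlam1, norm_zero]; exact hL0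
    · intro t ht ih
      by_cases hc : ‖lam t‖ ≤ C
      · have h1 := hdualnorm t ht
        have h2 : ‖lam t + μ • g t (x t)‖ ≤ ‖lam t‖ + ‖μ • g t (x t)‖ := norm_add_le _ _
        have h3 : ‖μ • g t (x t)‖ = μ * ‖g t (x t)‖ := by
          rw [norm_smul, Real.norm_eq_abs, abs_of_pos hμ]
        have h4 : μ * ‖g t (x t)‖ ≤ μ * M := mul_le_mul_of_nonneg_left (hgnorm t) hμ.le
        linarith
      · push_neg at hc
        have h1 := hdrift t ht
        have h2 := hkey t ht
        have h2' : 2 * μ * ⟪lam t, g t (x t)⟫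
            ≤ 2 * μ * (2 * G * R + R ^ 2 / (2 * α) - (ε - Vbar) * ‖lam t‖) :=
          mul_le_mul_of_nonneg_left h2 (by linarith)
        have h5 : (ε - Vbar) * C < (ε - Vbar) * ‖lam t‖ := mul_lt_mul_of_pos_left hc hεV'
        have h6 : ‖lam (t + 1)‖ ^ 2 ≤ ‖lam t‖ ^ 2 := by nlinarith [hμ]
        have h7 : ‖lam (t + 1)‖ ≤ ‖lam t‖ := by
          nlinarith [norm_nonneg (lam (t + 1)), norm_nonneg (lam t)]
        linarith
  -- entrywise accumulation of constraints in the dual variable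
  have hsumrec : ∀ N, ∀ i, μ * ∑ t ∈ Icc 1 N, g t (x t) i ≤ lam (N + 1) i := by
    intro N
    induction N with
    | zero =>
      intro i
      have he : Icc 1 0 = (∅ : Finset ℕ) := by simp
      rw [he]
      simp [hlam1]
    | succ N ih =>
      intro i
      rw [Finset.sum_Icc_succ_top (Nat.le_add_left 1 N), mul_add]
      have h1 := ih i
      have h2 : lam (N + 1) i + μ * g (N + 1) (x (N + 1)) i ≤ lam (N + 1 + 1) i := by
        rw [hdual (N + 1) (Nat.le_add_left 1 N)]
        have h3 := le_posProj (lam (N + 1) + μ • g (N + 1) (x (N + 1))) i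
        simpa using h3
      linarith only [h1, h2]
  have hfitA : ‖posProj (∑ t ∈ Icc 1 T, g t (x t))‖ ≤ (μ * M + C) / μ := by
    set S := ∑ t ∈ Icc 1 T, g t (x t) with hS
    have hentry : ∀ i, |(μ • posProj S) i| ≤ |lam (T + 1) i| := by
      intro i
      have hSi : S i = ∑ t ∈ Icc 1 T, g t (x t) i := by rw [hS, WithLp.ofLp_sum, Finset.sum_apply]
      have h1 : μ * S i ≤ lam (T + 1) i := by rw [hSi]; exact hsumrec T i
      have h2 : 0 ≤ lam (T + 1) i := hlamnn _ (by omega) i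
      have h3 : (μ • posProj S) i = μ * max (S i) 0 := rfl
      rw [h3, abs_of_nonneg (mul_nonneg hμ.le (le_max_right _ _)), abs_of_nonneg h2]
      rcases le_total (S i) 0 with h | h
      · rw [max_eq_right h]; simpa using h2
      · rw [max_eq_left h]; exact h1
    have hnorm := norm_le_norm_entry hentry
    rw [norm_smul, Real.norm_eq_abs, abs_of_pos hμ] at hnorm
    have h4 : μ * ‖posProj S‖ ≤ μ * M + C :=
      hnorm.trans (hlambound (T + 1) (by omega))
    rw [le_div_iff₀ hμ]
    linarith
  -- rpow bookkeeping
  set Q : ℝ := (T : ℝ) ^ ((β - 1) / 2) with hQdef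
  set P : ℝ := (T : ℝ) ^ ((1 - β) / 2) with hPdef
  have hQ0 : 0 < Q := Real.rpow_pos_of_pos hT0 _
  have hP0 : 0 < P := Real.rpow_pos_of_pos hT0 _
  have hPQ : P * Q = 1 := by
    rw [hPdef, hQdef, ← Real.rpow_add hT0]
    have he : (1 - β) / 2 + (β - 1) / 2 = (0 : ℝ) := by ring
    rw [he, Real.rpow_zero]
  have hPinv : P = Q⁻¹ := eq_inv_of_mul_eq_one_left hPQ
  have hPP : (T : ℝ) ^ (1 - β) = P * P := by
    rw [show (1 : ℝ) - β = (1 - β) / 2 + (1 - β) / 2 by ring, Real.rpow_add hT0, ← hPdef]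
  have hT3 : (T : ℝ) ^ ((1 + β) / 2) = (T : ℝ) * Q := by
    rw [show (1 + β) / 2 = 1 + (β - 1) / 2 by ring, Real.rpow_add hT0, Real.rpow_one, hQdef]
  constructor
  · -- dynamic fit
    refine le_trans hfitA ?_
    rw [hPP]
    have harith : (μ * M + C) / μ
        = M + (2 * G * R * P + R ^ 2 / 2 * (P * P) + M ^ 2 / 2) / (ε - Vbar) := by
      rw [hCdef, hαT, hμT, hPinv]
      field_simp
    exact le_of_eq harith
  · -- dynamic regret
    have hslot : ∀ t, 1 ≤ t → t ≤ T →
        f t (x t) - f t (xstar t) ≤ α * G ^ 2 / 2 + μ * M ^ 2 / 2 + (μ * M + C) * v t +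
          (‖xstar t - x t‖ ^ 2 - ‖xstar t - x (t + 1)‖ ^ 2) / (2 * α) +
          (‖lam (t + 1)‖ ^ 2 - ‖lam (t + 1 + 1)‖ ^ 2) / (2 * μ) := by
      intro t ht htT
      obtain ⟨hxst, hgst, -⟩ := hxstar t ht htT
      have ht1 : (1 : ℕ) ≤ t + 1 := by omega
      obtain ⟨hxt1X, hopt⟩ := hprimal (t + 1) ht1
      simp only [Nat.add_sub_cancel] at hopt
      have hlnn : ∀ i, 0 ≤ lam (t + 1) i := hlamnn (t + 1) ht1
      have hconv1 : f t (x t) + ⟪gradient (f t) (x t), xstar t - x t⟫ ≤ f t (xstar t) :=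
        convex_gradient_ineq (f t) (hfconv t) (hfdiff t) (x t) (xstar t)
      have hφ : ∀ a ∈ X, ∀ b ∈ X, ∀ θ : ℝ, 0 ≤ θ → θ ≤ 1 →
          ⟪gradient (f t) (x t), ((1 - θ) • a + θ • b) - x t⟫ +
              ⟪lam (t + 1), g t ((1 - θ) • a + θ • b)⟫
            ≤ (1 - θ) * (⟪gradient (f t) (x t), a - x t⟫ + ⟪lam (t + 1), g t a⟫)
              + θ * (⟪gradient (f t) (x t), b - x t⟫ + ⟪lam (t + 1), g t b⟫) := by
        intro a _ b _ θ h0 h1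
        have hgc : ∀ i, g t ((1 - θ) • a + θ • b) i ≤ ((1 - θ) • g t a + θ • g t b) i := by
          intro i
          have := (hgconv t i).2 (Set.mem_univ a) (Set.mem_univ b)
            (by linarith : (0:ℝ) ≤ 1 - θ) h0 (by ring)
          simpa [smul_eq_mul] using this
        have h2 : ⟪lam (t + 1), g t ((1 - θ) • a + θ • b)⟫
            ≤ ⟪lam (t + 1), (1 - θ) • g t a + θ • g t b⟫ := inner_le_entry hlnn hgc
        have h3 : ⟪lam (t + 1), (1 - θ) • g t a + θ • g t b⟫
            = (1 - θ) * ⟪lam (t + 1), g t a⟫ + θ * ⟪lam (t + 1), g t b⟫ := by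
          rw [inner_add_right, real_inner_smul_right, real_inner_smul_right]
        have h4 : ((1 - θ) • a + θ • b) - x t = (1 - θ) • (a - x t) + θ • (b - x t) := by
          rw [smul_sub, smul_sub]; module
        have h5 : ⟪gradient (f t) (x t), ((1 - θ) • a + θ • b) - x t⟫
            = (1 - θ) * ⟪gradient (f t) (x t), a - x t⟫
              + θ * ⟪gradient (f t) (x t), b - x t⟫ := by
          rw [h4, inner_add_right, real_inner_smul_right, real_inner_smul_right]
        rw [h5]
        linarith only [h2, h3]
      have hmin : ∀ z ∈ X,
          (⟪gradient (f t) (x t), x (t + 1) - x t⟫ + ⟪lam (t + 1), g t (x (t + 1))⟫)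
              + ‖x (t + 1) - x t‖ ^ 2 / (2 * α)
            ≤ (⟪gradient (f t) (x t), z - x t⟫ + ⟪lam (t + 1), g t z⟫)
              + ‖z - x t‖ ^ 2 / (2 * α) := by
        intro z hz
        have h := hopt z hz
        linarith only [h]
      have hprox : (⟪gradient (f t) (x t), x (t + 1) - x t⟫ + ⟪lam (t + 1), g t (x (t + 1))⟫)
            + ‖x (t + 1) - x t‖ ^ 2 / (2 * α) + ‖xstar t - x (t + 1)‖ ^ 2 / (2 * α)
          ≤ (⟪gradient (f t) (x t), xstar t - x t⟫ + ⟪lam (t + 1), g t (xstar t)⟫)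
            + ‖xstar t - x t‖ ^ 2 / (2 * α) :=
        prox_strong X hXconv
          (fun w => ⟪gradient (f t) (x t), w - x t⟫ + ⟪lam (t + 1), g t w⟫) hφ
          (x t) α hα (x (t + 1)) hxt1X hmin (xstar t) hxst
      have hdnorm : ‖gradient (f t) (x t)‖ ≤ G := hG t (x t) (hxX t)
      have hstep3 : -⟪gradient (f t) (x t), x (t + 1) - x t⟫
          ≤ α * G ^ 2 / 2 + ‖x (t + 1) - x t‖ ^ 2 / (2 * α) := by
        have h1 : |⟪gradient (f t) (x t), x (t + 1) - x t⟫| ≤ G * ‖x (t + 1) - x t‖ :=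
          le_trans (abs_real_inner_le_norm _ _)
            (mul_le_mul_of_nonneg_right hdnorm (norm_nonneg _))
        have h2 := (abs_le.mp h1).1
        have h3 : α * G ^ 2 / 2 + ‖x (t + 1) - x t‖ ^ 2 / (2 * α)
            - G * ‖x (t + 1) - x t‖ = (α * G - ‖x (t + 1) - x t‖) ^ 2 / (2 * α) := by
          field_simp
          ring
        have h4 : 0 ≤ (α * G - ‖x (t + 1) - x t‖) ^ 2 / (2 * α) := by positivity
        linarith only [h2, h3, h4]
      have hdrift2 := hdrift (t + 1) ht1
      have hstep4 : -⟪lam (t + 1), g (t + 1) (x (t + 1))⟫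
          ≤ ‖lam (t + 1)‖ ^ 2 / (2 * μ) - ‖lam (t + 1 + 1)‖ ^ 2 / (2 * μ) + μ * M ^ 2 / 2 := by
        have h1 : ‖lam (t + 1)‖ ^ 2 / (2 * μ) - ‖lam (t + 1 + 1)‖ ^ 2 / (2 * μ) + μ * M ^ 2 / 2
            + ⟪lam (t + 1), g (t + 1) (x (t + 1))⟫
            = (‖lam (t + 1)‖ ^ 2 + 2 * μ * ⟪lam (t + 1), g (t + 1) (x (t + 1))⟫
                + μ ^ 2 * M ^ 2 - ‖lam (t + 1 + 1)‖ ^ 2) / (2 * μ) := by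
          field_simp
          ring
        have h2 : 0 ≤ (‖lam (t + 1)‖ ^ 2 + 2 * μ * ⟪lam (t + 1), g (t + 1) (x (t + 1))⟫
            + μ ^ 2 * M ^ 2 - ‖lam (t + 1 + 1)‖ ^ 2) / (2 * μ) := by
          apply div_nonneg _ (by linarith)
          linarith only [hdrift2]
        linarith only [h1, h2]
      have hstep5 : ⟪lam (t + 1), g (t + 1) (x (t + 1)) - g t (x (t + 1))⟫
          ≤ (μ * M + C) * v t := by
        refine le_trans (inner_le_posProj hlnn) ?_
        exact mul_le_mul (hlambound (t + 1) ht1) (hvarv t (x (t + 1)) (hxX (t + 1)))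
          (norm_nonneg _) hL0
      have hsplit2 : ⟪lam (t + 1), g (t + 1) (x (t + 1)) - g t (x (t + 1))⟫
          = ⟪lam (t + 1), g (t + 1) (x (t + 1))⟫ - ⟪lam (t + 1), g t (x (t + 1))⟫ :=
        inner_sub_right _ _ _
      have hfeas : ⟪lam (t + 1), g t (xstar t)⟫ ≤ 0 := by
        have h1 : ⟪lam (t + 1), g t (xstar t)⟫
            ≤ ⟪lam (t + 1), (0 : EuclideanSpace ℝ (Fin m))⟫ :=
          inner_le_entry hlnn (fun i => by simpa using hgst i)
        simpa using h1
      rw [sub_div, sub_div]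
      linarith only [hconv1, hprox, hstep3, hstep4, hstep5, hsplit2, hfeas]
    have hsum1 : ∑ t ∈ Icc 1 T, (f t (x t) - f t (xstar t))
        ≤ ∑ t ∈ Icc 1 T, (α * G ^ 2 / 2 + μ * M ^ 2 / 2 + (μ * M + C) * v t +
          (‖xstar t - x t‖ ^ 2 - ‖xstar t - x (t + 1)‖ ^ 2) / (2 * α) +
          (‖lam (t + 1)‖ ^ 2 - ‖lam (t + 1 + 1)‖ ^ 2) / (2 * μ)) :=
      Finset.sum_le_sum fun t htm =>
        hslot t (Finset.mem_Icc.mp htm).1 (Finset.mem_Icc.mp htm).2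
    have hLHS : ∑ t ∈ Icc 1 T, (f t (x t) - f t (xstar t))
        = ∑ t ∈ Icc 1 T, f t (x t) - ∑ t ∈ Icc 1 T, f t (xstar t) := Finset.sum_sub_distrib _ _
    have hRHSsum : ∑ t ∈ Icc 1 T, (α * G ^ 2 / 2 + μ * M ^ 2 / 2 + (μ * M + C) * v t +
          (‖xstar t - x t‖ ^ 2 - ‖xstar t - x (t + 1)‖ ^ 2) / (2 * α) +
          (‖lam (t + 1)‖ ^ 2 - ‖lam (t + 1 + 1)‖ ^ 2) / (2 * μ))
        = (T : ℝ) * (α * G ^ 2 / 2 + μ * M ^ 2 / 2) + (μ * M + C) * (∑ t ∈ Icc 1 T, v t)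
          + (∑ t ∈ Icc 1 T, (‖xstar t - x t‖ ^ 2 - ‖xstar t - x (t + 1)‖ ^ 2)) / (2 * α)
          + (∑ t ∈ Icc 1 T, (‖lam (t + 1)‖ ^ 2 - ‖lam (t + 1 + 1)‖ ^ 2)) / (2 * μ) := by
      simp only [Finset.sum_add_distrib, Finset.sum_const, Nat.card_Icc, Nat.add_sub_cancel,
        nsmul_eq_mul, ← Finset.mul_sum, ← Finset.sum_div]
      ring
    have hAbound : ∑ t ∈ Icc 1 T, (‖xstar t - x t‖ ^ 2 - ‖xstar t - x (t + 1)‖ ^ 2)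
        ≤ 2 * R * (∑ t ∈ Icc 1 T, ‖xstar t - xstar (t - 1)‖) + R ^ 2 := by
      have hper : ∀ t ∈ Icc 1 T, ‖xstar t - x t‖ ^ 2 - ‖xstar t - x (t + 1)‖ ^ 2
          ≤ (‖xstar (t - 1) - x t‖ ^ 2 - ‖xstar (t + 1 - 1) - x (t + 1)‖ ^ 2)
            + 2 * R * ‖xstar t - xstar (t - 1)‖ := by
        intro t htm
        obtain ⟨ht, htT⟩ := Finset.mem_Icc.mp htm
        simp only [Nat.add_sub_cancel]
        have hst : xstar t ∈ X := hxsXle t htT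
        have hst1 : xstar (t - 1) ∈ X := hxsXle (t - 1) (by omega)
        have hab : (xstar t - x t) - (xstar (t - 1) - x t) = xstar t - xstar (t - 1) := by
          abel
        have h1 : ‖xstar t - x t‖ - ‖xstar (t - 1) - x t‖ ≤ ‖xstar t - xstar (t - 1)‖ := by
          rw [← hab]; exact norm_sub_norm_le _ _
        have h2 : ‖xstar t - x t‖ ≤ R := hR _ hst _ (hxX t)
        have h3 : ‖xstar (t - 1) - x t‖ ≤ R := hR _ hst1 _ (hxX t)
        have h5 : (‖xstar t - x t‖ + ‖xstar (t - 1) - x t‖)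
              * (‖xstar t - x t‖ - ‖xstar (t - 1) - x t‖)
            ≤ (‖xstar t - x t‖ + ‖xstar (t - 1) - x t‖) * ‖xstar t - xstar (t - 1)‖ :=
          mul_le_mul_of_nonneg_left h1 (by positivity)
        have h6 : (‖xstar t - x t‖ + ‖xstar (t - 1) - x t‖) * ‖xstar t - xstar (t - 1)‖
            ≤ 2 * R * ‖xstar t - xstar (t - 1)‖ :=
          mul_le_mul_of_nonneg_right (by linarith) (norm_nonneg _)
        have h7 : ‖xstar t - x t‖ ^ 2 - ‖xstar (t - 1) - x t‖ ^ 2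
            = (‖xstar t - x t‖ + ‖xstar (t - 1) - x t‖)
              * (‖xstar t - x t‖ - ‖xstar (t - 1) - x t‖) := by ring
        linarith only [h5, h6, h7]
      have htel2 : ∑ t ∈ Icc 1 T,
            (‖xstar (t - 1) - x t‖ ^ 2 - ‖xstar (t + 1 - 1) - x (t + 1)‖ ^ 2)
          = ‖xstar (1 - 1) - x 1‖ ^ 2 - ‖xstar (T + 1 - 1) - x (T + 1)‖ ^ 2 :=
        sum_Icc_telescope (fun s => ‖xstar (s - 1) - x s‖ ^ 2) T
      have hs1 := Finset.sum_le_sum hper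
      rw [Finset.sum_add_distrib, htel2, ← Finset.mul_sum] at hs1
      have h4 : ‖xstar (1 - 1) - x 1‖ ≤ R := by
        have h0 : (1 : ℕ) - 1 = 0 := rfl
        rw [h0]
        exact hR _ hxstar0 _ (hxX 1)
      have hsq : ‖xstar (1 - 1) - x 1‖ ^ 2 ≤ R ^ 2 :=
        pow_le_pow_left₀ (norm_nonneg _) h4 2
      linarith only [hs1, hsq, sq_nonneg ‖xstar (T + 1 - 1) - x (T + 1)‖]
    have hBbound : ∑ t ∈ Icc 1 T, (‖lam (t + 1)‖ ^ 2 - ‖lam (t + 1 + 1)‖ ^ 2)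
        ≤ μ ^ 2 * M ^ 2 := by
      have htel : ∑ t ∈ Icc 1 T, (‖lam (t + 1)‖ ^ 2 - ‖lam (t + 1 + 1)‖ ^ 2)
          = ‖lam (1 + 1)‖ ^ 2 - ‖lam (T + 1 + 1)‖ ^ 2 :=
        sum_Icc_telescope (fun s => ‖lam (s + 1)‖ ^ 2) T
      rw [htel]
      have h1 : ‖lam (1 + 1)‖ ≤ μ * M := by
        have h2 := hdualnorm 1 le_rfl
        rw [hlam1, zero_add, norm_smul, Real.norm_eq_abs, abs_of_pos hμ] at h2
        exact h2.trans (mul_le_mul_of_nonneg_left (hgnorm 1) hμ.le)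
      have h2 : ‖lam (1 + 1)‖ ^ 2 ≤ (μ * M) ^ 2 := pow_le_pow_left₀ (norm_nonneg _) h1 2
      have h3 : (μ * M) ^ 2 = μ ^ 2 * M ^ 2 := by ring
      linarith only [h2, h3, sq_nonneg ‖lam (T + 1 + 1)‖]
    have d1 : (∑ t ∈ Icc 1 T, (‖xstar t - x t‖ ^ 2 - ‖xstar t - x (t + 1)‖ ^ 2)) / (2 * α)
        ≤ (2 * R * (∑ t ∈ Icc 1 T, ‖xstar t - xstar (t - 1)‖) + R ^ 2) / (2 * α) := by
      rw [div_eq_mul_inv, div_eq_mul_inv]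
      exact mul_le_mul_of_nonneg_right hAbound (by positivity)
    have d2 : (∑ t ∈ Icc 1 T, (‖lam (t + 1)‖ ^ 2 - ‖lam (t + 1 + 1)‖ ^ 2)) / (2 * μ)
        ≤ (μ ^ 2 * M ^ 2) / (2 * μ) := by
      rw [div_eq_mul_inv, div_eq_mul_inv]
      exact mul_le_mul_of_nonneg_right hBbound (by positivity)
    rw [hLHS] at hsum1
    rw [hRHSsum] at hsum1
    have hcomb : ∑ t ∈ Icc 1 T, f t (x t) - ∑ t ∈ Icc 1 T, f t (xstar t)
        ≤ (T : ℝ) * (α * G ^ 2 / 2 + μ * M ^ 2 / 2) + (μ * M + C) * (∑ t ∈ Icc 1 T, v t)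
          + (2 * R * (∑ t ∈ Icc 1 T, ‖xstar t - xstar (t - 1)‖) + R ^ 2) / (2 * α)
          + (μ ^ 2 * M ^ 2) / (2 * μ) := by linarith only [hsum1, d1, d2]
    refine le_trans hcomb ?_
    apply le_of_eq
    rw [hCdef, hαT, hμT, hT3, hPinv]
    field_simp
    ring
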